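/- For every EL-chart A and every b ∈ B = A ∖ (A + n), there exists exactly one non-negative integer c such that f(b) − c·n ∈ B. -/
import Mathlib


namespace ELChart

/-- An EL-chart (for parameters `d`, `n` and `mfun τ = m_τ`): a non-empty subset
`A ⊆ ℤ^(d) = (ℤ/dℤ) × ℤ` which is bounded below and satisfies `f(A) ⊆ A` and `A + n ⊆ A`,
where `f (τ, x) = (τ + 1, x + m_τ)`. -/
def IsChart (d n : ℕ) (mfun : ZMod d → ℤ) (A : Set (ZMod d × ℤ)) : Prop :=
  A.Nonempty ∧ (∃ c : ℤ, ∀ p ∈ A, c ≤ p.2) ∧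
    (∀ p ∈ A, ((p.1 + 1 : ZMod d), p.2 + mfun p.1) ∈ A) ∧
    (∀ p ∈ A, (p.1, p.2 + (n : ℤ)) ∈ A)

/-- `B = A ∖ (A + n)`. -/
def Bset (d n : ℕ) (A : Set (ZMod d × ℤ)) : Set (ZMod d × ℤ) :=
  {p | p ∈ A ∧ (p.1, p.2 - (n : ℤ)) ∉ A}

/-- The shift `A + z` of a subset of `ℤ^(d)`. -/
def shift (d : ℕ) (A : Set (ZMod d × ℤ)) (z : ℤ) : Set (ZMod d × ℤ) :=
  (fun p : ZMod d × ℤ => (p.1, p.2 + z)) '' A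

/-- Two EL-charts are equivalent if they differ by a shift. -/
def ChartEquiv (d : ℕ) (A A' : Set (ZMod d × ℤ)) : Prop :=
  ∃ z : ℤ, shift d A z = A'

/-- The sequence `b 0, b 1, …` associated with an EL-chart: `b 0 = min B_(0)` and `b (i+1)`
is the unique element of `B` of the form `f (b i) − c * n` with `c` a non-negative integer. -/
noncomputable def bseq (d n : ℕ) (mfun : ZMod d → ℤ) (A : Set (ZMod d × ℤ)) :
    ℕ → ZMod d × ℤ
  | 0 => ((0 : ZMod d), sInf {x : ℤ | ((0 : ZMod d), x) ∈ Bset d n A})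
  | i + 1 =>
    ((bseq d n mfun A i).1 + 1,
      sInf {y : ℤ | ((bseq d n mfun A i).1 + 1, y) ∈ Bset d n A ∧
        ((bseq d n mfun A i).2 + mfun (bseq d n mfun A i).1 - y) % (n : ℤ) = 0 ∧
        y ≤ (bseq d n mfun A i).2 + mfun (bseq d n mfun A i).1})

/-- The entry `μ'_k` (for `1 ≤ k ≤ d*n`) of the type of an EL-chart: the non-negative integer
with `b k = f (b (k-1)) − μ'_k * n`. -/
noncomputable def typeInt (d n : ℕ) (mfun : ZMod d → ℤ) (A : Set (ZMod d × ℤ)) (k : ℕ) : ℤ :=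
  ((bseq d n mfun A (k - 1)).2 + mfun (bseq d n mfun A (k - 1)).1
    - (bseq d n mfun A k).2) / (n : ℤ)

/-- The type of an EL-chart as a tuple: `μ'_{τ,i} = μ'_{τ + (i−1)d}` where the `Fin d`-index
`τ` corresponds to `τ + 1 ∈ {1, …, d}` and the `Fin n`-index `i` to `i + 1 ∈ {1, …, n}`. -/
noncomputable def typeTup (d n : ℕ) (mfun : ZMod d → ℤ) (A : Set (ZMod d × ℤ)) :
    Fin d → Fin n → ℤ :=
  fun τ i => typeInt d n mfun A (τ.val + 1 + i.val * d)

/-- The entry `μ'_{τ',i'}` of the type of an EL-chart attached to an element `p = b_{τ',i'}`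
of `B`: if `q ∈ B` is the (unique) predecessor of `p`, i.e. the element with
`p = f q − c * n` for a non-negative integer `c`, then `muOf p = c`. -/
noncomputable def muOf (d n : ℕ) (mfun : ZMod d → ℤ) (A : Set (ZMod d × ℤ))
    (p : ZMod d × ℤ) : ℤ :=
  (sInf {y : ℤ | ((p.1 - 1 : ZMod d), y) ∈ Bset d n A ∧
      (y + mfun (p.1 - 1) - p.2) % (n : ℤ) = 0 ∧ p.2 ≤ y + mfun (p.1 - 1)}
    + mfun (p.1 - 1) - p.2) / (n : ℤ)

/-- The `i`-th largest element `b̃_{τ,i}` of `B_(τ)` (1-indexed: `i ∈ {1, …, n}`): the unique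
element of `B_(τ)` with exactly `i − 1` elements of `B_(τ)` above it. -/
noncomputable def btilde (d n : ℕ) (A : Set (ZMod d × ℤ)) (τ : ZMod d) (i : ℕ) : ℤ :=
  sInf {y : ℤ | (τ, y) ∈ Bset d n A ∧
    Set.ncard {z : ℤ | (τ, z) ∈ Bset d n A ∧ y < z} = i - 1}

/-- The cotype of an EL-chart as a tuple: `μ̃_{τ,i} = μ'_{τ',i'}` where `b̃_{τ,i} = b_{τ',i'}`,
i.e. the type entry attached to the `i`-th largest element of `B_(τ)`. -/
noncomputable def cotypeTup (d n : ℕ) (mfun : ZMod d → ℤ) (A : Set (ZMod d × ℤ)) :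
    Fin d → Fin n → ℤ :=
  fun τ i =>
    muOf d n mfun A (((τ.val + 1 : ℕ) : ZMod d),
      btilde d n A ((τ.val + 1 : ℕ) : ZMod d) (i.val + 1))

/-- Membership in `P_{m,n,d}`: all entries are non-negative and
`Σ_{i=1}^k Σ_{τ=1}^d μ_{τ,i} ≤ k*m/n` for `k = 1, …, n`, with equality for `k = n`. -/
def memP (d n m : ℕ) (μ : Fin d → Fin n → ℤ) : Prop :=
  (∀ τ i, 0 ≤ μ τ i) ∧
    (∀ k : ℕ, 1 ≤ k → k ≤ n →
      (n : ℤ) * ∑ τ : Fin d, ∑ i : Fin n, (if i.val + 1 ≤ k then μ τ i else 0)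
        ≤ (k : ℤ) * (m : ℤ)) ∧
    (∑ τ : Fin d, ∑ i : Fin n, μ τ i) = (m : ℤ)

/-- An EL-chart is normalised if `Σ_{b ∈ B_(0)} |b| = n(n−1)/2`. -/
def IsNormalised (d n : ℕ) (A : Set (ZMod d × ℤ)) : Prop :=
  ∑ᶠ x ∈ {x : ℤ | ((0 : ZMod d), x) ∈ Bset d n A}, x = ((n * (n - 1) / 2 : ℕ) : ℤ)

/-- The dominant rearrangement of a tuple: each component is sorted weakly decreasingly. -/
def domOf (d n : ℕ) (μ : Fin d → Fin n → ℤ) : Fin d → Fin n → ℤ :=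
  fun τ i => μ τ (Tuple.sort (fun j => -(μ τ j)) i)

/-- A tuple is dominant if each of its `d` components is weakly decreasing. -/
def IsDom (d n : ℕ) (μ : Fin d → Fin n → ℤ) : Prop :=
  ∀ τ : Fin d, ∀ i j : Fin n, i ≤ j → μ τ j ≤ μ τ i

end ELChart

open ELChart

/-- For every EL-chart `A` and every `b ∈ B = A ∖ (A + n)`, there exists
exactly one non-negative integer `c` such that `f b − c * n ∈ B`. -/
theorem exists_unique_step
    (d n m : ℕ) [NeZero d] (hn : 0 < n) (hm : 0 < m) (hmn : Nat.Coprime m n)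
    (mfun : ZMod d → ℤ) (hsum : ∑ τ : ZMod d, mfun τ = (m : ℤ))
    (A : Set (ZMod d × ℤ)) (hA : IsChart d n mfun A)
    (b : ZMod d × ℤ) (hb : b ∈ Bset d n A) :
    ∃! c : ℕ, ((b.1 + 1 : ZMod d), b.2 + mfun b.1 - (c : ℤ) * (n : ℤ)) ∈ Bset d n A := by
  obtain ⟨hne, ⟨lb, hlb⟩, hf, hshift⟩ := hA
  obtain ⟨hbA, hbN⟩ := hb
  set τ' : ZMod d := b.1 + 1 with hτ'
  set y : ℤ := b.2 + mfun b.1 with hy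
  have hyA : (τ', y) ∈ A := hf b hbA
  set T : Set ℕ := {c : ℕ | (τ', y - (c : ℤ) * (n : ℤ)) ∉ A} with hT
  have hTne : T.Nonempty := by
    refine ⟨(y - lb).toNat + 1, fun hmem => ?_⟩
    have hbd : lb ≤ y - (((y - lb).toNat + 1 : ℕ) : ℤ) * (n : ℤ) := hlb _ hmem
    have h1 : y - lb ≤ (((y - lb).toNat : ℤ)) := Int.self_le_toNat _
    have hn1 : (1:ℤ) ≤ (n:ℤ) := by exact_mod_cast hn
    have hnn : (0:ℤ) ≤ (((y - lb).toNat + 1 : ℕ) : ℤ) := by positivity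
    have h2 : (((y - lb).toNat + 1 : ℕ) : ℤ) ≤ (((y - lb).toNat + 1 : ℕ) : ℤ) * (n:ℤ) := by
      nlinarith
    push_cast at h2 hbd
    linarith
  have h0 : 0 ∉ T := by simp [hT, hyA]
  set c0 := sInf T with hc0
  have hc0T : c0 ∈ T := Nat.sInf_mem hTne
  have hc0pos : 0 < c0 := Nat.pos_of_ne_zero (fun h => h0 (h ▸ hc0T))
  have hup : ∀ c : ℕ, (τ', y - (c : ℤ) * (n : ℤ)) ∈ A → ∀ c' : ℕ, c' ≤ c →
      (τ', y - (c' : ℤ) * (n : ℤ)) ∈ A := by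
    intro c hc c' hle
    induction c with
    | zero => simpa [Nat.le_zero.mp hle] using hc
    | succ k ih =>
      rcases Nat.lt_or_ge c' (k + 1) with h | h
      · have hk : (τ', y - ((k:ℤ)+1) * (n : ℤ)) ∈ A := by push_cast at hc; exact hc
        have hk2 : (τ', y - ((k:ℤ)+1) * (n:ℤ) + (n:ℤ)) ∈ A := hshift _ hk
        have e : y - ((k:ℤ)+1) * (n:ℤ) + (n:ℤ) = y - (k:ℤ)*(n:ℤ) := by ring
        rw [e] at hk2
        exact ih hk2 (Nat.lt_succ_iff.mp h)
      · have hc' : c' = k + 1 := le_antisymm hle h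
        subst hc'
        exact hc
  refine ⟨c0 - 1, ⟨?_, ?_⟩, ?_⟩
  · by_contra hcon
    have := Nat.sInf_le (show c0 - 1 ∈ T from hcon)
    omega
  · intro hcon
    apply hc0T
    have hcast : ((c0 - 1 : ℕ) : ℤ) = (c0:ℤ) - 1 := by omega
    rw [hcast] at hcon
    have e : y - ((c0:ℤ) - 1) * (n:ℤ) - (n:ℤ) = y - (c0:ℤ) * (n:ℤ) := by ring
    rwa [e] at hcon
  · intro c' ⟨hc'A, hc'N⟩
    have h1 : c' < c0 := by
      by_contra h
      exact hc0T (hup c' hc'A c0 (by omega))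
    have h2 : c0 ≤ c' + 1 := by
      apply Nat.sInf_le
      intro hcon
      apply hc'N
      have hcast : ((c' + 1 : ℕ) : ℤ) = (c':ℤ) + 1 := by push_cast; ring
      rw [hcast] at hcon
      have e : y - ((c':ℤ) + 1) * (n:ℤ) = y - (c':ℤ) * (n:ℤ) - (n:ℤ) := by ring
      rwa [e] at hcon
    omega
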